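/- Let c be a closure operator on subsets of a type α and define A ⫶a_C B iff c(A∪C) ∩ c(B∪C) = c(C). Then ⫶a satisfies base monotonicity if and only if the lattice of closed sets is modular, i.e., for all closed sets A, B, C with C ⊆ B one has B ∩ c(A∪C) = c((B∩A)∪C). -/
import Mathlib


/-- The relation `⫶a`: `A ⫶a_C B` iff `c(A∪C) ∩ c(B∪C) = c(C)`. -/
def aInd {α : Type*} (c : Set α → Set α) (A C B : Set α) : Prop :=
  c (A ∪ C) ∩ c (B ∪ C) = c C

/-- Exercise on modularity: `⫶a` satisfies base monotonicity iff
the lattice of closed sets is modular. -/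
theorem stmt_13 {α : Type*} (c : Set α → Set α)
    (cmono : ∀ A B : Set α, A ⊆ B → c A ⊆ c B)
    (cext : ∀ A : Set α, A ⊆ c A)
    (cidem : ∀ A : Set α, c (c A) = c A) :
    (∀ A B C D : Set α, D ⊆ C → C ⊆ B → aInd c A D B → aInd c A C B) ↔
    (∀ A B C : Set α, c A = A → c B = B → c C = C → C ⊆ B →
      B ∩ c (A ∪ C) = c ((B ∩ A) ∪ C)) := by
  constructor
  · intro bm A B C hA hB hC hCB
    set E := c ((B ∩ A) ∪ C) with hE
    have hEB : E ⊆ B := by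
      have : (B ∩ A) ∪ C ⊆ B := Set.union_subset Set.inter_subset_left hCB
      calc E ⊆ c B := cmono _ _ this
        _ = B := hB
    have hABclosed : c (A ∩ B) = A ∩ B := by
      apply Set.Subset.antisymm _ (cext _)
      apply Set.subset_inter
      · calc c (A ∩ B) ⊆ c A := cmono _ _ Set.inter_subset_left
          _ = A := hA
      · calc c (A ∩ B) ⊆ c B := cmono _ _ Set.inter_subset_right
          _ = B := hB
    have hbase : aInd c A (A ∩ B) B := by
      unfold aInd
      rw [Set.union_eq_self_of_subset_right Set.inter_subset_left,
        Set.union_eq_self_of_subset_right Set.inter_subset_right, hA, hB, hABclosed]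
    have hDE : A ∩ B ⊆ E := by
      intro x hx
      exact cext _ (Or.inl ⟨hx.2, hx.1⟩)
    have hind : aInd c A E B := bm A B E (A ∩ B) hDE hEB hbase
    apply Set.Subset.antisymm
    · intro x hx
      have h1 : x ∈ c (A ∪ E) := cmono _ _ (Set.union_subset_union_right A
        (fun y hy => cext _ (Or.inr hy))) hx.2
      have h2 : x ∈ c (B ∪ E) := cext _ (Or.inl hx.1)
      have : x ∈ c E := by rw [← hind]; exact ⟨h1, h2⟩
      rwa [hE, cidem] at this
    · apply Set.subset_inter hEB
      apply cmono
      exact Set.union_subset_union_left C Set.inter_subset_right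
  · intro mod A B C D hDC hCB hind
    unfold aInd at *
    have hBD : B ∪ D = B := Set.union_eq_self_of_subset_right (hDC.trans hCB)
    have hBC : B ∪ C = B := Set.union_eq_self_of_subset_right hCB
    rw [hBD] at hind
    rw [hBC]
    have hmod := mod (c (A ∪ D)) (c B) (c C) (cidem _) (cidem _) (cidem _)
      (cmono _ _ hCB)
    rw [Set.inter_comm (c B) (c (A ∪ D)), hind] at hmod
    have hcc : c (c D ∪ c C) = c C := by
      have : c D ∪ c C = c C := Set.union_eq_self_of_subset_left (cmono _ _ hDC)
      rw [this, cidem]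
    rw [hcc] at hmod
    apply Set.Subset.antisymm
    · intro x hx
      rw [← hmod]
      refine ⟨hx.2, cmono _ _ ?_ hx.1⟩
      exact Set.union_subset_union (fun y hy => cext _ (Or.inl hy)) (cext C)
    · apply Set.subset_inter (cmono _ _ (Set.subset_union_right)) (cmono _ _ hCB)
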